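/- For any α₀ > 7/4 and any real root x₀ of h(α₀, x), we have ∂h/∂x(α₀, x₀) ≠ 0; hence by the implicit function theorem each of the 6 period-3 points of f_{α₀} continues smoothly in α for α > 7/4. -/

import Mathlib

/-- h(α,x), the degree-6 factor of f_α³(x) - x -/
noncomputable def h (α x : ℝ) : ℝ :=
  α ^ 6 * x ^ 6 - α ^ 5 * x ^ 5 + (-3 * α ^ 5 + α ^ 4) * x ^ 4 + (2 * α ^ 4 - α ^ 3) * x ^ 3
    + (3 * α ^ 4 - 3 * α ^ 3 + α ^ 2) * x ^ 2 + (-α ^ 3 + 2 * α ^ 2 - α) * x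
    - α ^ 3 + 2 * α ^ 2 - α + 1

set_option maxHeartbeats 2000000 in
theorem simple_roots_above_seven_fourths (α₀ : ℝ) (hα : 7 / 4 < α₀)
    (x₀ : ℝ) (hroot : h α₀ x₀ = 0) :
    deriv (fun x => h α₀ x) x₀ ≠ 0 := by
  -- Explicit derivative
  have heq : (fun x : ℝ => h α₀ x) = fun x : ℝ =>
      α₀ ^ 6 * x ^ 6 - α₀ ^ 5 * x ^ 5 + (-3 * α₀ ^ 5 + α₀ ^ 4) * x ^ 4
        + (2 * α₀ ^ 4 - α₀ ^ 3) * x ^ 3 + (3 * α₀ ^ 4 - 3 * α₀ ^ 3 + α₀ ^ 2) * x ^ 2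
        + (-α₀ ^ 3 + 2 * α₀ ^ 2 - α₀) * x + (-α₀ ^ 3 + 2 * α₀ ^ 2 - α₀ + 1) := by
    funext x; unfold h; ring
  have hD : HasDerivAt (fun x : ℝ => h α₀ x)
      (α₀ ^ 6 * (6 * x₀ ^ 5) - α₀ ^ 5 * (5 * x₀ ^ 4) + (-3 * α₀ ^ 5 + α₀ ^ 4) * (4 * x₀ ^ 3)
        + (2 * α₀ ^ 4 - α₀ ^ 3) * (3 * x₀ ^ 2) + (3 * α₀ ^ 4 - 3 * α₀ ^ 3 + α₀ ^ 2) * (2 * x₀)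
        + (-α₀ ^ 3 + 2 * α₀ ^ 2 - α₀)) x₀ := by
    rw [heq]
    have p6 := (hasDerivAt_pow 6 x₀).const_mul (α₀ ^ 6)
    have p5 := (hasDerivAt_pow 5 x₀).const_mul (α₀ ^ 5)
    have p4 := (hasDerivAt_pow 4 x₀).const_mul (-3 * α₀ ^ 5 + α₀ ^ 4)
    have p3 := (hasDerivAt_pow 3 x₀).const_mul (2 * α₀ ^ 4 - α₀ ^ 3)
    have p2 := (hasDerivAt_pow 2 x₀).const_mul (3 * α₀ ^ 4 - 3 * α₀ ^ 3 + α₀ ^ 2)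
    have p1 := (hasDerivAt_id x₀).const_mul (-α₀ ^ 3 + 2 * α₀ ^ 2 - α₀)
    have := (((((p6.sub p5).add p4).add p3).add p2).add p1).add_const
      (-α₀ ^ 3 + 2 * α₀ ^ 2 - α₀ + 1)
    refine this.congr_deriv ?_
    push_cast
    ring
  intro hzero
  have hderiv : α₀ ^ 6 * (6 * x₀ ^ 5) - α₀ ^ 5 * (5 * x₀ ^ 4) + (-3 * α₀ ^ 5 + α₀ ^ 4) * (4 * x₀ ^ 3)
        + (2 * α₀ ^ 4 - α₀ ^ 3) * (3 * x₀ ^ 2) + (3 * α₀ ^ 4 - 3 * α₀ ^ 3 + α₀ ^ 2) * (2 * x₀)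
        + (-α₀ ^ 3 + 2 * α₀ ^ 2 - α₀) = 0 := by
    rw [← hD.deriv]; exact hzero
  -- Bezout identity: S·h + T·h' = R(α₀)
  have key : ((2401:ℝ) * α₀ ^ 0 * x₀ ^ 0 + (-33908:ℝ) * α₀ ^ 1 * x₀ ^ 0 + (166292:ℝ) * α₀ ^ 2 * x₀ ^ 0 + (-324736:ℝ) * α₀ ^ 3 * x₀ ^ 0 + (196416:ℝ) * α₀ ^ 4 * x₀ ^ 0 + (41472:ℝ) * α₀ ^ 5 * x₀ ^ 0 + (2058:ℝ) * α₀ ^ 1 * x₀ ^ 1 + (-32928:ℝ) * α₀ ^ 2 * x₀ ^ 1 + (198520:ℝ) * α₀ ^ 3 * x₀ ^ 1 + (-566176:ℝ) * α₀ ^ 4 * x₀ ^ 1 + (792256:ℝ) * α₀ ^ 5 * x₀ ^ 1 + (-488448:ℝ) * α₀ ^ 6 * x₀ ^ 1 + (82944:ℝ) * α₀ ^ 7 * x₀ ^ 1 + (1568:ℝ) * α₀ ^ 3 * x₀ ^ 2 + (-27104:ℝ) * α₀ ^ 4 * x₀ ^ 2 + (179456:ℝ) * α₀ ^ 5 * x₀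 ^ 2 + (-567168:ℝ) * α₀ ^ 6 * x₀ ^ 2 + (857088:ℝ) * α₀ ^ 7 * x₀ ^ 2 + (-497664:ℝ) * α₀ ^ 8 * x₀ ^ 2 + (784:ℝ) * α₀ ^ 4 * x₀ ^ 3 + (-11200:ℝ) * α₀ ^ 5 * x₀ ^ 3 + (56128:ℝ) * α₀ ^ 6 * x₀ ^ 3 + (-115200:ℝ) * α₀ ^ 7 * x₀ ^ 3 + (82944:ℝ) * α₀ ^ 8 * x₀ ^ 3 + (4704:ℝ) * α₀ ^ 5 * x₀ ^ 4 + (-67200:ℝ) * α₀ ^ 6 * x₀ ^ 4 + (336768:ℝ) * α₀ ^ 7 * x₀ ^ 4 + (-691200:ℝ) * α₀ ^ 8 * x₀ ^ 4 + (497664:ℝ) * α₀ ^ 9 * x₀ ^ 4) * h α₀ x₀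
      + ((735:ℝ) * α₀ ^ 0 * x₀ ^ 0 + (-10892:ℝ) * α₀ ^ 1 * x₀ ^ 0 + (58220:ℝ) * α₀ ^ 2 * x₀ ^ 0 + (-136064:ℝ) * α₀ ^ 3 * x₀ ^ 0 + (135360:ℝ) * α₀ ^ 4 * x₀ ^ 0 + (-41472:ℝ) * α₀ ^ 5 * x₀ ^ 0 + (-343:ℝ) * α₀ ^ 0 * x₀ ^ 1 + (4508:ℝ) * α₀ ^ 1 * x₀ ^ 1 + (-17780:ℝ) * α₀ ^ 2 * x₀ ^ 1 + (4752:ℝ) * α₀ ^ 3 * x₀ ^ 1 + (116704:ℝ) * α₀ ^ 4 * x₀ ^ 1 + (-270400:ℝ) * α₀ ^ 5 * x₀ ^ 1 + (239616:ℝ) * α₀ ^ 6 * x₀ ^ 1 + (-82944:ℝ) * α₀ ^ 7 * x₀ ^ 1 + (-343:ℝ) * α₀ ^ 1 * x₀ ^ 2 + (5684:ℝ) * α₀ ^ 2 * x₀ ^ 2 + (-35756:ℝ) * α₀ ^ 3 * x₀ ^ 2 + (106528:ℝ) * α₀ ^ 4 * x₀ ^ 2 + (-151488:ℝ) * α₀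 ^ 5 * x₀ ^ 2 + (82944:ℝ) * α₀ ^ 6 * x₀ ^ 2 + (-392:ℝ) * α₀ ^ 3 * x₀ ^ 3 + (7168:ℝ) * α₀ ^ 4 * x₀ ^ 3 + (-50464:ℝ) * α₀ ^ 5 * x₀ ^ 3 + (169856:ℝ) * α₀ ^ 6 * x₀ ^ 3 + (-271872:ℝ) * α₀ ^ 7 * x₀ ^ 3 + (165888:ℝ) * α₀ ^ 8 * x₀ ^ 3 + (-784:ℝ) * α₀ ^ 5 * x₀ ^ 5 + (11200:ℝ) * α₀ ^ 6 * x₀ ^ 5 + (-56128:ℝ) * α₀ ^ 7 * x₀ ^ 5 + (115200:ℝ) * α₀ ^ 8 * x₀ ^ 5 + (-82944:ℝ) * α₀ ^ 9 * x₀ ^ 5) *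
        (α₀ ^ 6 * (6 * x₀ ^ 5) - α₀ ^ 5 * (5 * x₀ ^ 4) + (-3 * α₀ ^ 5 + α₀ ^ 4) * (4 * x₀ ^ 3)
          + (2 * α₀ ^ 4 - α₀ ^ 3) * (3 * x₀ ^ 2) + (3 * α₀ ^ 4 - 3 * α₀ ^ 3 + α₀ ^ 2) * (2 * x₀)
          + (-α₀ ^ 3 + 2 * α₀ ^ 2 - α₀)) = (2401:ℝ) * α₀ ^ 0 + (-37044:ℝ) * α₀ ^ 1 + (217364:ℝ) * α₀ ^ 2 + (-641984:ℝ) * α₀ ^ 3 + (1151040:ℝ) * α₀ ^ 4 + (-1436416:ℝ) * α₀ ^ 5 + (1124352:ℝ) * α₀ ^ 6 + (-331776:ℝ) * α₀ ^ 7 := by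
    unfold h; ring
  rw [hroot, hderiv, mul_zero, mul_zero, add_zero] at key
  -- But R(α₀) = -(4α₀-7)(2α₀-1)²(36α₀-7)²(16α₀²-4α₀+7) < 0
  have hfac : ((2401:ℝ) * α₀ ^ 0 + (-37044:ℝ) * α₀ ^ 1 + (217364:ℝ) * α₀ ^ 2 + (-641984:ℝ) * α₀ ^ 3 + (1151040:ℝ) * α₀ ^ 4 + (-1436416:ℝ) * α₀ ^ 5 + (1124352:ℝ) * α₀ ^ 6 + (-331776:ℝ) * α₀ ^ 7) =
      -((4 * α₀ - 7) * (2 * α₀ - 1) ^ 2 * (36 * α₀ - 7) ^ 2 * (16 * α₀ ^ 2 - 4 * α₀ + 7)) := by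
    ring
  rw [hfac] at key
  have h1 : (0:ℝ) < 4 * α₀ - 7 := by linarith
  have h2 : (0:ℝ) < 2 * α₀ - 1 := by linarith
  have h3 : (0:ℝ) < 36 * α₀ - 7 := by linarith
  have h4 : (0:ℝ) < 16 * α₀ ^ 2 - 4 * α₀ + 7 := by nlinarith [sq_nonneg (4 * α₀ - 1 / 2)]
  have hpos := mul_pos (mul_pos (mul_pos h1 (pow_pos h2 2)) (pow_pos h3 2)) h4
  linarith [key, hpos]
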